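/- Let $\mathcal{C} = \mathrm{conv}\left(\{(\varphi_{\Sigma_i}(X_i - \vartheta))_{i=1}^n : \vartheta \in \mathbb{R}^d\} \cup \{0\}\right) \subset \mathbb{R}^n$. Then $\mathcal{C}$ is convex and compact, and the strictly concave function $L \mapsto \frac{1}{n}\sum_{i=1}^n \log L_i$ attains its maximum over $\mathcal{C} \cap (0,\infty)^n$ at a unique point $\hat{L}$. -/

import Mathlib

open MeasureTheory Matrix Finset
open Filter

noncomputable def gaussDensity {d : ℕ} (S : Matrix (Fin d) (Fin d) ℝ)
    (x : Fin d → ℝ) : ℝ :=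
  (Real.sqrt ((2 * Real.pi) ^ d * S.det))⁻¹ *
    Real.exp (-(1 / 2) * (x ⬝ᵥ S⁻¹.mulVec x))

open Finset Filter

lemma sum_pad {M : Type*} [AddCommMonoid M] {k N : ℕ} (hkN : k ≤ N) (f : Fin k → M) :
    (∑ i : Fin N, if h : (i : ℕ) < k then f ⟨i, h⟩ else 0) = ∑ j : Fin k, f j := by
  have h1 : (∑ i : Fin N, if h : (i : ℕ) < k then f ⟨i, h⟩ else 0)
      = ∑ j ∈ Finset.range N, (if h : j < k then f ⟨j, h⟩ else 0) :=
    Fin.sum_univ_eq_sum_range (fun j => if h : j < k then f ⟨j, h⟩ else 0) N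
  have h2 : (∑ j : Fin k, if h : (j : ℕ) < k then f ⟨j, h⟩ else 0)
      = ∑ j ∈ Finset.range k, (if h : j < k then f ⟨j, h⟩ else 0) :=
    Fin.sum_univ_eq_sum_range (fun j => if h : j < k then f ⟨j, h⟩ else 0) k
  rw [h1, ← Finset.sum_subset (Finset.range_subset_range.2 hkN) (by
    intro j _ hj
    rw [dif_neg (by simpa using hj)]), ← h2]
  exact Finset.sum_congr rfl fun j _ => by rw [dif_pos j.isLt]

lemma isCompact_convexHull_fin {m : ℕ} {s : Set (Fin m → ℝ)} (hs : IsCompact s) :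
    IsCompact (convexHull ℝ s) := by
  rcases s.eq_empty_or_nonempty with rfl | ⟨p, hp⟩
  · simpa using isCompact_empty
  · set N := m + 1 with hN
    set φ : (Fin N → ℝ) × (Fin N → (Fin m → ℝ)) → (Fin m → ℝ) :=
      fun q => ∑ i, q.1 i • q.2 i with hφdef
    have hφ : Continuous φ := by
      apply continuous_finset_sum
      intro i _
      exact ((continuous_apply i).comp continuous_fst).smul
        ((continuous_apply i).comp continuous_snd)
    have hK : IsCompact ((stdSimplex ℝ (Fin N)) ×ˢ (Set.univ.pi fun _ : Fin N => s)) :=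
      (isCompact_stdSimplex ℝ (Fin N)).prod (isCompact_univ_pi fun _ => hs)
    have himg : convexHull ℝ s = φ '' ((stdSimplex ℝ (Fin N)) ×ˢ (Set.univ.pi fun _ : Fin N => s)) := by
      apply Set.Subset.antisymm
      · intro x hx
        rw [convexHull_eq_union] at hx
        simp only [Set.mem_iUnion] at hx
        obtain ⟨t, ht, haff, hxt⟩ := hx
        rw [t.convexHull_eq] at hxt
        obtain ⟨w, hw0, hw1, hwx⟩ := hxt
        rw [Finset.centerMass_eq_of_sum_1 _ _ hw1] at hwx
        have hcard : t.card ≤ N := by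
          have := haff.card_le_finrank_succ
          rw [Fintype.card_coe] at this
          refine this.trans ?_
          have h2 : Module.finrank ℝ (vectorSpan ℝ (Set.range ((↑) : t → (Fin m → ℝ))))
              ≤ Module.finrank ℝ (Fin m → ℝ) := Submodule.finrank_le _
          have h3 : Module.finrank ℝ (Fin m → ℝ) = m := by
            simp [Module.finrank_pi]
          omega
        set e := t.equivFin with he
        refine ⟨⟨fun i => if h : (i : ℕ) < t.card then w (e.symm ⟨i, h⟩) else 0,
          fun i => if h : (i : ℕ) < t.card then (e.symm ⟨i, h⟩ : Fin m → ℝ) else p⟩, ⟨?_, ?_⟩, ?_⟩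
        · constructor
          · intro i
            dsimp only
            split_ifs with h
            · exact hw0 _ (e.symm ⟨i, h⟩).2
            · exact le_rfl
          · rw [sum_pad hcard (fun j => w (e.symm j))]
            rw [Equiv.sum_comp e.symm (fun c => w (c : Fin m → ℝ))]
            rw [Finset.sum_coe_sort t w]
            exact hw1
        · intro i _
          dsimp only
          split_ifs with h
          · exact ht (e.symm ⟨i, h⟩).2
          · exact hp
        · show (∑ i : Fin N,
              (if h : (i : ℕ) < t.card then w (e.symm ⟨i, h⟩) else 0) •
                (if h : (i : ℕ) < t.card then (e.symm ⟨i, h⟩ : Fin m → ℝ) else p)) = x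
          have : (∑ i : Fin N,
              (if h : (i : ℕ) < t.card then w (e.symm ⟨i, h⟩) else 0) •
                (if h : (i : ℕ) < t.card then (e.symm ⟨i, h⟩ : Fin m → ℝ) else p))
              = ∑ i : Fin N, (if h : (i : ℕ) < t.card
                  then w (e.symm ⟨i, h⟩) • (e.symm ⟨i, h⟩ : Fin m → ℝ) else 0) := by
            refine Finset.sum_congr rfl fun i _ => ?_
            split_ifs with h
            · rfl
            · rw [zero_smul]
          rw [this, sum_pad hcard (fun j => w (e.symm j) • (e.symm j : Fin m → ℝ)),
            Equiv.sum_comp e.symm (fun c => w (c : Fin m → ℝ) • (c : Fin m → ℝ)),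
            Finset.sum_coe_sort t (fun y => w y • y)]
          exact hwx
      · rintro x ⟨⟨wv, zv⟩, ⟨hw, hz⟩, rfl⟩
        exact (convex_convexHull ℝ s).sum_mem (fun i _ => hw.1 i) hw.2
          (fun i _ => subset_convexHull ℝ s (hz i (Set.mem_univ i)))
    rw [himg]
    exact hK.image hφ

lemma gaussDensity_pos {d : ℕ} {S : Matrix (Fin d) (Fin d) ℝ} (hS : S.PosDef)
    (x : Fin d → ℝ) : 0 < gaussDensity S x := by
  unfold gaussDensity
  have hdet : 0 < S.det := hS.det_pos
  have h1 : 0 < (2 * Real.pi) ^ d * S.det :=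
    mul_pos (pow_pos (by positivity) d) hdet
  positivity

lemma quad_tendsto {d : ℕ} {M : Matrix (Fin d) (Fin d) ℝ} (hM : M.PosDef) :
    Tendsto (fun x : Fin d → ℝ => x ⬝ᵥ M.mulVec x) (cocompact _) atTop := by
  have hQc : Continuous fun x : Fin d → ℝ => x ⬝ᵥ M.mulVec x := by
    simp only [dotProduct, mulVec]
    refine continuous_finset_sum _ fun i _ => (continuous_apply i).mul ?_
    exact continuous_finset_sum _ fun j _ => continuous_const.mul (continuous_apply j)
  cases isEmpty_or_nonempty (Fin d) with
  | inl h =>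
    haveI : Unique (Fin d → ℝ) := ⟨⟨fun i => 0⟩, fun f => funext fun i => h.elim i⟩
    haveI : Finite (Fin d → ℝ) := Finite.of_subsingleton
    rw [Filter.cocompact_eq_bot]
    exact tendsto_bot
  | inr h =>
    obtain ⟨x0, hx0mem, hx0min⟩ :=
      (isCompact_sphere (0 : Fin d → ℝ) 1).exists_isMinOn
        (NormedSpace.sphere_nonempty.2 zero_le_one) hQc.continuousOn
    set c := x0 ⬝ᵥ M.mulVec x0 with hc
    have hx0ne : x0 ≠ 0 := by
      intro h0
      rw [h0] at hx0mem
      simp at hx0mem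
    have hcpos : 0 < c := hM.dotProduct_mulVec_pos hx0ne
    have hbound : ∀ y : Fin d → ℝ, c * ‖y‖ ^ 2 ≤ y ⬝ᵥ M.mulVec y := by
      intro y
      rcases eq_or_ne y 0 with rfl | hy
      · simp
      · have hny : 0 < ‖y‖ := norm_pos_iff.2 hy
        set u := ‖y‖⁻¹ • y with hu
        have humem : u ∈ Metric.sphere (0 : Fin d → ℝ) 1 := by
          simp [hu, norm_smul, abs_of_pos (inv_pos.2 hny), inv_mul_cancel₀ hny.ne']
        have hQu : c ≤ u ⬝ᵥ M.mulVec u := hx0min humem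
        have hscale : u ⬝ᵥ M.mulVec u = (‖y‖⁻¹) ^ 2 * (y ⬝ᵥ M.mulVec y) := by
          rw [hu, Matrix.mulVec_smul, smul_dotProduct, dotProduct_smul]
          simp [smul_eq_mul]; ring
        rw [hscale] at hQu
        have := mul_le_mul_of_nonneg_left hQu (sq_nonneg ‖y‖)
        calc c * ‖y‖ ^ 2 = ‖y‖ ^ 2 * c := by ring
          _ ≤ ‖y‖ ^ 2 * ((‖y‖⁻¹) ^ 2 * (y ⬝ᵥ M.mulVec y)) := this
          _ = y ⬝ᵥ M.mulVec y := by
            field_simp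
    refine tendsto_atTop_mono hbound ?_
    have h1 : Tendsto (fun y : Fin d → ℝ => ‖y‖ ^ 2) (cocompact _) atTop :=
      (tendsto_pow_atTop (by norm_num)).comp tendsto_norm_cocompact_atTop
    exact (tendsto_const_mul_atTop_of_pos hcpos).2 h1

-- continuity of F and tendsto to 0
lemma gauss_cont {d n : ℕ} (X : Fin n → (Fin d → ℝ)) (Sig : Fin n → Matrix (Fin d) (Fin d) ℝ) :
    Continuous fun ϑ : Fin d → ℝ => fun i => gaussDensity (Sig i) (X i - ϑ) := by
  refine continuous_pi fun i => ?_
  unfold gaussDensity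
  refine continuous_const.mul (Real.continuous_exp.comp (continuous_const.mul ?_))
  have hQc : Continuous fun x : Fin d → ℝ => x ⬝ᵥ (Sig i)⁻¹.mulVec x := by
    simp only [dotProduct, mulVec]
    refine continuous_finset_sum _ fun k _ => (continuous_apply k).mul ?_
    exact continuous_finset_sum _ fun j _ => continuous_const.mul (continuous_apply j)
  exact hQc.comp (continuous_const.sub continuous_id)

lemma gauss_tendsto {d n : ℕ} (X : Fin n → (Fin d → ℝ)) (Sig : Fin n → Matrix (Fin d) (Fin d) ℝ)
    (hpd : ∀ i, (Sig i).PosDef) :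
    Tendsto (fun ϑ : Fin d → ℝ => fun i => gaussDensity (Sig i) (X i - ϑ))
      (cocompact _) (nhds 0) := by
  rw [tendsto_pi_nhds]
  intro i
  have hsub : Tendsto (fun ϑ : Fin d → ℝ => X i - ϑ) (cocompact _) (cocompact _) := by
    have : (fun ϑ : Fin d → ℝ => X i - ϑ)
        = (Homeomorph.addLeft (X i)) ∘ (Homeomorph.neg (Fin d → ℝ)) := by
      funext ϑ; simp [sub_eq_add_neg]
    rw [this]
    exact ((Homeomorph.neg (Fin d → ℝ)).trans
      (Homeomorph.addLeft (X i))).isClosedEmbedding.tendsto_cocompact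
  have hQ : Tendsto (fun ϑ : Fin d → ℝ => (X i - ϑ) ⬝ᵥ (Sig i)⁻¹.mulVec (X i - ϑ))
      (cocompact _) atTop := (quad_tendsto (hpd i).inv).comp hsub
  have hexp : Tendsto (fun ϑ : Fin d → ℝ =>
      Real.exp (-(1 / 2) * ((X i - ϑ) ⬝ᵥ (Sig i)⁻¹.mulVec (X i - ϑ)))) (cocompact _) (nhds 0) := by
    refine Real.tendsto_exp_atBot.comp ?_
    exact hQ.const_mul_atTop_of_neg (by norm_num : (-(1/2) : ℝ) < 0)
  have : (fun ϑ : Fin d → ℝ => gaussDensity (Sig i) (X i - ϑ))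
      = fun ϑ => (Real.sqrt ((2 * Real.pi) ^ d * (Sig i).det))⁻¹ *
        Real.exp (-(1 / 2) * ((X i - ϑ) ⬝ᵥ (Sig i)⁻¹.mulVec (X i - ϑ))) := rfl
  rw [this, Pi.zero_apply]
  have h0 : ((Real.sqrt ((2 * Real.pi) ^ d * (Sig i).det))⁻¹ * 0 : ℝ) = 0 := by ring
  rw [← h0]
  exact hexp.const_mul _

open Finset Filter

lemma exists_unique_max {n : ℕ} {C : Set (Fin n → ℝ)} (hCconv : Convex ℝ C)
    (hCcomp : IsCompact C) {L0 : Fin n → ℝ} (hL0C : L0 ∈ C) (hL0pos : ∀ i, 0 < L0 i) :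
    ∃! Lhat : Fin n → ℝ, Lhat ∈ C ∩ {L | ∀ i, 0 < L i} ∧
      IsMaxOn (fun L : Fin n → ℝ => (1 / (n : ℝ)) * ∑ i, Real.log (L i))
        (C ∩ {L | ∀ i, 0 < L i}) Lhat := by
  rcases Nat.eq_zero_or_pos n with hn | hn
  · subst hn
    have hall : ∀ L L' : Fin 0 → ℝ, L = L' := fun L L' => funext fun i => i.elim0
    refine ⟨L0, ⟨⟨hL0C, hL0pos⟩, ?_⟩, fun y _ => hall y L0⟩
    intro L hL
    have hLe : L = L0 := hall L L0
    simp only [Set.mem_setOf_eq, hLe]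
    exact le_rfl
  have hnpos : (0 : ℝ) < n := by exact_mod_cast hn
  set f : (Fin n → ℝ) → ℝ := fun L => (1 / (n : ℝ)) * ∑ i, Real.log (L i) with hf
  set P := C ∩ {L : Fin n → ℝ | ∀ i, 0 < L i} with hP
  obtain ⟨r, hr⟩ := hCcomp.isBounded.subset_closedBall 0
  set Mb : ℝ := max r 1 with hMb
  have hMb1 : (1 : ℝ) ≤ Mb := le_max_right r 1
  have hub : ∀ L ∈ C, ∀ i, L i ≤ Mb := by
    intro L hL i
    have h2 : ‖L‖ ≤ r := by simpa [dist_zero_right] using hr hL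
    calc L i ≤ ‖L i‖ := le_abs_self _
      _ ≤ ‖L‖ := norm_le_pi_norm L i
      _ ≤ r := h2
      _ ≤ Mb := le_max_left r 1
  set SumL0 : ℝ := ∑ j, Real.log (L0 j) with hSumL0
  set δ1 : ℝ := Real.exp (SumL0 - ((n - 1 : ℕ) : ℝ) * Real.log Mb - 1) with hδ1
  obtain ⟨i0, -, hi0⟩ := Finset.exists_min_image univ L0 ⟨⟨0, hn⟩, mem_univ _⟩
  set δ : ℝ := min (L0 i0) δ1 with hδ
  have hδpos : 0 < δ := lt_min (hL0pos i0) (Real.exp_pos _)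
  set K := C ∩ {L : Fin n → ℝ | ∀ i, δ ≤ L i} with hK
  have hclosed : IsClosed {L : Fin n → ℝ | ∀ i, δ ≤ L i} := by
    have : {L : Fin n → ℝ | ∀ i, δ ≤ L i} = ⋂ i, {L : Fin n → ℝ | δ ≤ L i} := by
      ext L; simp
    rw [this]
    exact isClosed_iInter fun i => isClosed_le continuous_const (continuous_apply i)
  have hKcomp : IsCompact K := hCcomp.inter_right hclosed
  have hL0K : L0 ∈ K := ⟨hL0C, fun i => (min_le_left _ _).trans (hi0 i (mem_univ i))⟩
  have hfc : ContinuousOn f K := by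
    refine ContinuousOn.mul continuousOn_const ?_
    refine continuousOn_finset_sum _ fun i _ => ?_
    refine continuousOn_of_forall_continuousAt fun L hL => ?_
    exact ContinuousAt.log ((continuous_apply i).continuousAt)
      (ne_of_gt (lt_of_lt_of_le hδpos (hL.2 i)))
  obtain ⟨Lhat, hLhatK, hmaxK⟩ := hKcomp.exists_isMaxOn ⟨L0, hL0K⟩ hfc
  have hLhatP : Lhat ∈ P := ⟨hLhatK.1, fun i => lt_of_lt_of_le hδpos (hLhatK.2 i)⟩
  have hfL0le : f L0 ≤ f Lhat := hmaxK hL0K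
  have hmaxP : IsMaxOn f P Lhat := by
    intro L hL
    by_cases hLK : ∀ i, δ ≤ L i
    · exact hmaxK ⟨hL.1, hLK⟩
    · push_neg at hLK
      obtain ⟨i, hi⟩ := hLK
      have hLpos : ∀ j, 0 < L j := hL.2
      have hlogM : ∀ j, Real.log (L j) ≤ Real.log Mb := fun j =>
        Real.log_le_log (hLpos j) (hub L hL.1 j)
      have hlogi : Real.log (L i) ≤ SumL0 - ((n - 1 : ℕ) : ℝ) * Real.log Mb - 1 := by
        have h1 : Real.log (L i) ≤ Real.log δ1 :=
          Real.log_le_log (hLpos i) (le_of_lt (lt_of_lt_of_le hi (min_le_right _ _)))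
        rwa [hδ1, Real.log_exp] at h1
      have hsum : ∑ j, Real.log (L j) ≤ SumL0 - 1 := by
        have hsplit : ∑ j, Real.log (L j)
            = Real.log (L i) + ∑ j ∈ univ.erase i, Real.log (L j) :=
          (Finset.add_sum_erase _ _ (mem_univ i)).symm
        have h2 : ∑ j ∈ univ.erase i, Real.log (L j) ≤ ((n - 1 : ℕ) : ℝ) * Real.log Mb := by
          calc ∑ j ∈ univ.erase i, Real.log (L j) ≤ ∑ _j ∈ univ.erase i, Real.log Mb :=
                Finset.sum_le_sum fun j _ => hlogM j
            _ = ((n - 1 : ℕ) : ℝ) * Real.log Mb := by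
                rw [Finset.sum_const, card_erase_of_mem (mem_univ i), card_univ,
                  Fintype.card_fin, nsmul_eq_mul]
        rw [hsplit]; linarith
      have hle : f L ≤ f L0 := by
        rw [hf]
        dsimp only
        refine mul_le_mul_of_nonneg_left ?_ (by positivity)
        rw [← hSumL0]; linarith
      exact hle.trans hfL0le
  refine ⟨Lhat, ⟨hLhatP, hmaxP⟩, ?_⟩
  rintro L' ⟨hL'P, hmax'⟩
  by_contra hne
  have hfeq : f L' = f Lhat := le_antisymm (hmaxP hL'P) (hmax' hLhatP)
  have hsumeq : ∑ j, Real.log (L' j) = ∑ j, Real.log (Lhat j) := by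
    have h1 : (1 / (n : ℝ)) ≠ 0 := by positivity
    have := hfeq
    rw [hf] at this
    dsimp only at this
    exact mul_left_cancel₀ h1 this
  set m : Fin n → ℝ := fun j => (1/2 : ℝ) * L' j + (1/2 : ℝ) * Lhat j with hm
  have hmC : m ∈ C := by
    have h := hCconv hL'P.1 hLhatP.1 (by norm_num : (0:ℝ) ≤ 1/2)
      (by norm_num : (0:ℝ) ≤ 1/2) (by norm_num : (1/2 : ℝ) + 1/2 = 1)
    have he2 : m = (1/2 : ℝ) • L' + (1/2 : ℝ) • Lhat := by
      funext j; simp [hm, smul_eq_mul]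
    rw [he2]; exact h
  have hmpos : ∀ j, 0 < m j := fun j => by
    have := hL'P.2 j; have := hLhatP.2 j
    simp only [hm]; linarith
  have hjle : ∀ j, (1/2 : ℝ) * Real.log (L' j) + (1/2 : ℝ) * Real.log (Lhat j)
      ≤ Real.log (m j) := by
    intro j
    rcases eq_or_ne (L' j) (Lhat j) with he | hne2
    · rw [hm]; dsimp only; rw [he]
      have h3 : (1/2 : ℝ) * Lhat j + (1/2 : ℝ) * Lhat j = Lhat j := by ring
      rw [h3]; linarith
    · exact le_of_lt (strictConcaveOn_log_Ioi.2 (hL'P.2 j) (hLhatP.2 j) hne2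
        (by norm_num) (by norm_num) (by norm_num))
  have hex : ∃ j, (1/2 : ℝ) * Real.log (L' j) + (1/2 : ℝ) * Real.log (Lhat j)
      < Real.log (m j) := by
    have : ∃ j, L' j ≠ Lhat j := by
      by_contra h; push_neg at h; exact hne (funext h)
    obtain ⟨j, hj2⟩ := this
    exact ⟨j, strictConcaveOn_log_Ioi.2 (hL'P.2 j) (hLhatP.2 j) hj2
      (by norm_num) (by norm_num) (by norm_num)⟩
  have hsumlt : ∑ j, Real.log (Lhat j) < ∑ j, Real.log (m j) := by
    have h1 : ∑ j, ((1/2 : ℝ) * Real.log (L' j) + (1/2 : ℝ) * Real.log (Lhat j))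
        < ∑ j, Real.log (m j) :=
      Finset.sum_lt_sum (fun j _ => hjle j) (hex.imp fun j h => ⟨mem_univ j, h⟩)
    have h2 : ∑ j, ((1/2 : ℝ) * Real.log (L' j) + (1/2 : ℝ) * Real.log (Lhat j))
        = (1/2 : ℝ) * ∑ j, Real.log (L' j) + (1/2 : ℝ) * ∑ j, Real.log (Lhat j) := by
      rw [Finset.sum_add_distrib, ← Finset.mul_sum, ← Finset.mul_sum]
    rw [h2, hsumeq] at h1
    linarith
  have hstrict : f Lhat < f m := by
    rw [hf]; dsimp only
    exact mul_lt_mul_of_pos_left hsumlt (by positivity)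
  exact absurd (hmaxP ⟨hmC, hmpos⟩) (not_le.2 hstrict)


/-- The feasible set of likelihood vectors is convex and compact, and the
average-log objective attains its maximum over the positive part at a
unique point. -/
theorem likelihood_set_compact_convex_unique_max {d n : ℕ}
    (X : Fin n → (Fin d → ℝ))
    (Sig : Fin n → Matrix (Fin d) (Fin d) ℝ)
    (hpd : ∀ i, (Sig i).PosDef) :
    Convex ℝ (convexHull ℝ
        (({L : Fin n → ℝ | ∃ ϑ : Fin d → ℝ,
            L = fun i => gaussDensity (Sig i) (X i - ϑ)} : Set (Fin n → ℝ))
          ∪ {0})) ∧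
    IsCompact (convexHull ℝ
        (({L : Fin n → ℝ | ∃ ϑ : Fin d → ℝ,
            L = fun i => gaussDensity (Sig i) (X i - ϑ)} : Set (Fin n → ℝ))
          ∪ {0})) ∧
    (∃! Lhat : Fin n → ℝ,
      Lhat ∈ (convexHull ℝ
          (({L : Fin n → ℝ | ∃ ϑ : Fin d → ℝ,
              L = fun i => gaussDensity (Sig i) (X i - ϑ)} : Set (Fin n → ℝ))
            ∪ {0})) ∩ {L | ∀ i, 0 < L i} ∧
      IsMaxOn (fun L : Fin n → ℝ => (1 / (n : ℝ)) * ∑ i, Real.log (L i))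
        ((convexHull ℝ
          (({L : Fin n → ℝ | ∃ ϑ : Fin d → ℝ,
              L = fun i => gaussDensity (Sig i) (X i - ϑ)} : Set (Fin n → ℝ))
            ∪ {0})) ∩ {L | ∀ i, 0 < L i}) Lhat) := by
  have hSeq : (({L : Fin n → ℝ | ∃ ϑ : Fin d → ℝ,
        L = fun i => gaussDensity (Sig i) (X i - ϑ)} : Set (Fin n → ℝ)) ∪ {0})
      = insert 0 (Set.range fun ϑ : Fin d → ℝ => fun i => gaussDensity (Sig i) (X i - ϑ)) := by
    rw [Set.union_singleton]
    congr 1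
    ext L
    simp only [Set.mem_setOf_eq, Set.mem_range]
    exact ⟨fun ⟨ϑ, h⟩ => ⟨ϑ, h.symm⟩, fun ⟨ϑ, h⟩ => ⟨ϑ, h.symm⟩⟩
  have hScomp : IsCompact (({L : Fin n → ℝ | ∃ ϑ : Fin d → ℝ,
        L = fun i => gaussDensity (Sig i) (X i - ϑ)} : Set (Fin n → ℝ)) ∪ {0}) := by
    rw [hSeq]
    exact (gauss_tendsto X Sig hpd).isCompact_insert_range_of_cocompact (gauss_cont X Sig)
  have hCcomp := isCompact_convexHull_fin hScomp
  have hCconv := convex_convexHull ℝ (({L : Fin n → ℝ | ∃ ϑ : Fin d → ℝ,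
        L = fun i => gaussDensity (Sig i) (X i - ϑ)} : Set (Fin n → ℝ)) ∪ {0})
  refine ⟨hCconv, hCcomp, ?_⟩
  have hL0S : (fun i => gaussDensity (Sig i) (X i - 0)) ∈
      (({L : Fin n → ℝ | ∃ ϑ : Fin d → ℝ,
        L = fun i => gaussDensity (Sig i) (X i - ϑ)} : Set (Fin n → ℝ)) ∪ {0}) :=
    Set.mem_union_left _ ⟨0, rfl⟩
  exact exists_unique_max hCconv hCcomp (subset_convexHull ℝ _ hL0S)
    (fun i => gaussDensity_pos (hpd i) _)
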